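/- Expression of the third Casimir of 𝔰𝔬(N) through even Casimirs (C₃ = (C₀/2 − 1)·C₂ with C₀ = N): in U(𝔰𝔬(N)) one has 2 · ∑_{a,b,c : Fin N} ι(X a b) · ι(X b c) · ι(X c a) = (N − 2) · ∑_{a,b : Fin N} ι(X a b) · ι(X b a). -/

import Mathlib

open Matrix in
noncomputable section
open Matrix

attribute [local instance 100] LieRing.ofAssociativeRing

/-- The anti-diagonal identity matrix. -/
def soJ (N : ℕ) : Matrix (Fin N) (Fin N) ℂ := fun i j => if j = Fin.rev i then 1 else 0

lemma soJ_mul (N : ℕ) (A : Matrix (Fin N) (Fin N) ℂ) (i j : Fin N) :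
    (soJ N * A) i j = A (Fin.rev i) j := by
  simp [soJ, Matrix.mul_apply, Fin.rev_eq_iff]

lemma mul_soJ (N : ℕ) (A : Matrix (Fin N) (Fin N) ℂ) (i j : Fin N) :
    (A * soJ N) i j = A i (Fin.rev j) := by
  classical
  simp only [Matrix.mul_apply, soJ]
  rw [Finset.sum_eq_single (Fin.rev j)]
  · simp
  · intro b _ hb
    rw [if_neg, mul_zero]
    intro h
    exact hb (by rw [h, Fin.rev_rev])
  · simp

/-- The Lie algebra 𝔰𝔬(N). -/
def soL (N : ℕ) : LieSubalgebra ℂ (Matrix (Fin N) (Fin N) ℂ) where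
  carrier := {A | Aᵀ * soJ N = -(soJ N * A)}
  add_mem' := by
    intro A B hA hB
    simp only [Set.mem_setOf_eq] at *
    rw [Matrix.transpose_add, Matrix.add_mul, hA, hB, Matrix.mul_add, neg_add]
  zero_mem' := by
    simp [Set.mem_setOf_eq]
  smul_mem' := by
    intro c A hA
    simp only [Set.mem_setOf_eq] at *
    rw [Matrix.transpose_smul, Matrix.smul_mul, hA, Matrix.mul_smul, smul_neg]
  lie_mem' := by
    intro A B hA hB
    simp only [Set.mem_setOf_eq] at *
    rw [Ring.lie_def, Matrix.transpose_sub, Matrix.transpose_mul, Matrix.transpose_mul,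
      Matrix.sub_mul, Matrix.mul_assoc, Matrix.mul_assoc, hA, hB, Matrix.mul_neg,
      Matrix.mul_neg, ← Matrix.mul_assoc, ← Matrix.mul_assoc, hA, hB, Matrix.neg_mul,
      Matrix.neg_mul, neg_neg, neg_neg, Matrix.mul_sub, Matrix.mul_assoc, Matrix.mul_assoc]
    abel

/-- The generators X_{ab} of 𝔰𝔬(N), as matrices. -/
def soXmat (N : ℕ) (a b : Fin N) : Matrix (Fin N) (Fin N) ℂ :=
  Matrix.single a b 1 - Matrix.single (Fin.rev b) (Fin.rev a) 1

lemma soXmat_mem (N : ℕ) (a b : Fin N) : soXmat N a b ∈ soL N := by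
  change (soXmat N a b)ᵀ * soJ N = -(soJ N * soXmat N a b)
  ext i j
  rw [mul_soJ]
  simp only [Matrix.neg_apply, soJ_mul, soXmat, Matrix.sub_apply, Matrix.transpose_apply,
    Matrix.single, Matrix.of_apply]
  simp only [Fin.rev_inj, Fin.rev_eq_iff, neg_sub]
  simp [and_comm]

/-- The generators of 𝔰𝔬(N) as elements of the Lie algebra. -/
def soX (N : ℕ) (a b : Fin N) : soL N := ⟨soXmat N a b, soXmat_mem N a b⟩

/-- The extension of the 𝔰𝔬(N) weight system to permutations. -/
def wso (N : ℕ) {m : ℕ} (s : Equiv.Perm (Fin m)) :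
    UniversalEnvelopingAlgebra ℂ (soL N) :=
  ∑ i : Fin m → Fin N,
    (List.ofFn fun k : Fin m =>
      UniversalEnvelopingAlgebra.ι ℂ (soX N (i k) (i (s k)))).prod


set_option synthInstance.maxHeartbeats 1000000
set_option maxHeartbeats 1000000

lemma soEmul (N : ℕ) (a b c d : Fin N) :
    (Matrix.single a b (1:ℂ)) * Matrix.single c d 1 =
      if b = c then Matrix.single a d 1 else 0 := by
  split_ifs with h
  · subst h; simp
  · exact Matrix.single_mul_single_of_ne (c := (1:ℂ)) a b _ h 1

lemma soXmat_rev (N : ℕ) (a b : Fin N) :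
    soXmat N (Fin.rev b) (Fin.rev a) = - soXmat N a b := by
  simp [soXmat, Fin.rev_rev]

lemma soXmat_trace_zero (N : ℕ) : ∑ b : Fin N, soXmat N b b = 0 := by
  simp only [soXmat, Finset.sum_sub_distrib]
  rw [show ∑ b : Fin N, Matrix.single (Fin.rev b) (Fin.rev b) (1:ℂ)
      = ∑ b : Fin N, Matrix.single b b (1:ℂ) from
    Fintype.sum_equiv Fin.revPerm _ _ (fun b => rfl)]
  simp

lemma so_keymat (N : ℕ) (a c : Fin N) :
    ∑ b : Fin N, ⁅soXmat N a b, soXmat N b c⁆ = ((N:ℂ)-2) • soXmat N a c := by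
  have expand : ∀ b : Fin N, ⁅soXmat N a b, soXmat N b c⁆ =
      soXmat N a c - (if a = c then soXmat N b b else 0)
        - (if b = Fin.rev c then soXmat N a (Fin.rev b) else 0)
        + (if b = Fin.rev a then soXmat N (Fin.rev c) b else 0) := by
    intro b
    simp only [Ring.lie_def, soXmat, Matrix.sub_mul, Matrix.mul_sub, soEmul, Fin.rev_inj,
      Fin.rev_rev, Fin.rev_eq_iff, eq_comm]
    split_ifs
    any_goals abel
    all_goals (exfalso; simp only [Fin.ext_iff, Fin.val_rev] at *; omega)
  rw [Finset.sum_congr rfl (fun b _ => expand b)]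
  have h1 : ∑ _b : Fin N, (if a = c then soXmat N _b _b else 0) = 0 := by
    split_ifs with h
    · exact soXmat_trace_zero N
    · simp
  have h2 : ∑ b : Fin N, (if b = Fin.rev c then soXmat N a (Fin.rev b) else 0)
      = soXmat N a c := by
    rw [Finset.sum_ite_eq' Finset.univ (Fin.rev c) (fun b => soXmat N a (Fin.rev b))]
    simp [Fin.rev_rev]
  have h3 : ∑ b : Fin N, (if b = Fin.rev a then soXmat N (Fin.rev c) b else 0)
      = - soXmat N a c := by
    rw [Finset.sum_ite_eq' Finset.univ (Fin.rev a) (fun b => soXmat N (Fin.rev c) b)]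
    simp [soXmat_rev]
  rw [Finset.sum_add_distrib, Finset.sum_sub_distrib, Finset.sum_sub_distrib,
    Finset.sum_const, h1, h2, h3, Finset.card_univ, Fintype.card_fin,
    sub_smul, ← Nat.cast_smul_eq_nsmul ℂ, two_smul]
  abel

lemma soX_rev (N : ℕ) (a b : Fin N) :
    soX N (Fin.rev b) (Fin.rev a) = - soX N a b :=
  Subtype.ext (soXmat_rev N a b)

lemma so_keysoX (N : ℕ) (a c : Fin N) :
    ∑ b : Fin N, ⁅soX N a b, soX N b c⁆ = ((N:ℂ)-2) • soX N a c := by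
  apply Subtype.ext
  rw [AddSubmonoidClass.coe_finset_sum]
  simp only [LieSubalgebra.coe_bracket, SetLike.val_smul]
  exact so_keymat N a c

def YU (N : ℕ) (a b : Fin N) : UniversalEnvelopingAlgebra ℂ (soL N) :=
  UniversalEnvelopingAlgebra.ι ℂ (soX N a b)

def ιL (N : ℕ) : (soL N) →ₗ[ℂ] UniversalEnvelopingAlgebra ℂ (soL N) :=
  (UniversalEnvelopingAlgebra.ι ℂ (L := soL N)).toLinearMap

lemma YU_eq (N : ℕ) (a b : Fin N) : YU N a b = ιL N (soX N a b) := rfl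

lemma YU_rev (N : ℕ) (a b : Fin N) :
    YU N (Fin.rev b) (Fin.rev a) = - YU N a b := by
  rw [YU_eq, YU_eq, soX_rev, (ιL N).map_neg]

lemma so_keyU (N : ℕ) (a c : Fin N) :
    ∑ b : Fin N, (YU N a b * YU N b c - YU N b c * YU N a b) =
      ((N:ℂ)-2) • YU N a c := by
  have h : ∀ b : Fin N, YU N a b * YU N b c - YU N b c * YU N a b =
      ιL N ⁅soX N a b, soX N b c⁆ := by
    intro b
    show _ = UniversalEnvelopingAlgebra.ι ℂ ⁅soX N a b, soX N b c⁆
    rw [LieHom.map_lie, Ring.lie_def]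
    rfl
  rw [Finset.sum_congr rfl (fun b _ => h b), ← map_sum, so_keysoX, (ιL N).map_smul, YU_eq]

/-- 2·C₃ = (N − 2)·C₂ in U(𝔰𝔬(N)). -/
theorem so_casimir_three (N : ℕ) :
    (2 : ℂ) • ∑ a : Fin N, ∑ b : Fin N, ∑ c : Fin N,
        UniversalEnvelopingAlgebra.ι ℂ (soX N a b) *
          UniversalEnvelopingAlgebra.ι ℂ (soX N b c) *
          UniversalEnvelopingAlgebra.ι ℂ (soX N c a) =
      ((N : ℂ) - 2) • ∑ a : Fin N, ∑ b : Fin N,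
        UniversalEnvelopingAlgebra.ι ℂ (soX N a b) *
          UniversalEnvelopingAlgebra.ι ℂ (soX N b a) := by
  show (2 : ℂ) • ∑ a : Fin N, ∑ b : Fin N, ∑ c : Fin N, YU N a b * YU N b c * YU N c a =
      ((N : ℂ) - 2) • ∑ a : Fin N, ∑ b : Fin N, YU N a b * YU N b a
  have e1 : (∑ p : Fin N × Fin N × Fin N, YU N p.1 p.2.1 * YU N p.2.1 p.2.2 * YU N p.2.2 p.1)
      = ∑ a : Fin N, ∑ b : Fin N, ∑ c : Fin N, YU N a b * YU N b c * YU N c a := by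
    rw [Fintype.sum_prod_type]
    exact Finset.sum_congr rfl fun a _ => by rw [Fintype.sum_prod_type]
  have e2 : (∑ p : Fin N × Fin N × Fin N, -(YU N p.2.1 p.2.2 * YU N p.1 p.2.1 * YU N p.2.2 p.1))
      = ∑ a : Fin N, ∑ b : Fin N, ∑ c : Fin N, -(YU N b c * YU N a b * YU N c a) := by
    rw [Fintype.sum_prod_type]
    exact Finset.sum_congr rfl fun a _ => by rw [Fintype.sum_prod_type]
  have flip : (∑ a : Fin N, ∑ b : Fin N, ∑ c : Fin N, YU N a b * YU N b c * YU N c a) =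
      ∑ a : Fin N, ∑ b : Fin N, ∑ c : Fin N, -(YU N b c * YU N a b * YU N c a) := by
    rw [← e1, ← e2]
    refine Fintype.sum_equiv
      ⟨fun p => (Fin.rev p.2.2, Fin.rev p.2.1, Fin.rev p.1),
       fun p => (Fin.rev p.2.2, Fin.rev p.2.1, Fin.rev p.1),
       fun p => by simp [Fin.rev_rev], fun p => by simp [Fin.rev_rev]⟩ _ _ (fun p => ?_)
    simp only [Equiv.coe_fn_mk, YU_rev]
    simp [neg_mul, mul_neg, neg_neg]
  rw [two_smul]
  nth_rewrite 2 [flip]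
  rw [← Finset.sum_add_distrib]
  have step : ∀ a : Fin N,
      ((∑ b : Fin N, ∑ c : Fin N, YU N a b * YU N b c * YU N c a) +
        ∑ b : Fin N, ∑ c : Fin N, -(YU N b c * YU N a b * YU N c a)) =
      ∑ c : Fin N, ((N:ℂ)-2) • (YU N a c * YU N c a) := by
    intro a
    have h1 : ∀ b : Fin N,
        ((∑ c : Fin N, YU N a b * YU N b c * YU N c a) +
          ∑ c : Fin N, -(YU N b c * YU N a b * YU N c a)) =
        ∑ c : Fin N, (YU N a b * YU N b c * YU N c a + -(YU N b c * YU N a b * YU N c a)) :=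
      fun b => (Finset.sum_add_distrib).symm
    rw [← Finset.sum_add_distrib, Finset.sum_congr rfl (fun b _ => h1 b), Finset.sum_comm]
    refine Finset.sum_congr rfl (fun c _ => ?_)
    have hb : ∀ b : Fin N, (YU N a b * YU N b c * YU N c a + -(YU N b c * YU N a b * YU N c a))
        = (YU N a b * YU N b c - YU N b c * YU N a b) * YU N c a := fun b => by
      rw [sub_mul, ← sub_eq_add_neg]
    rw [Finset.sum_congr rfl (fun b _ => hb b), ← Finset.sum_mul, so_keyU N a c, smul_mul_assoc]
  rw [Finset.sum_congr rfl (fun a _ => step a), Finset.smul_sum]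
  exact Finset.sum_congr rfl (fun a _ => (Finset.smul_sum).symm)


end
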